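/- Let 3/2 < β ≤ 2. Then there exists a constant C > 0 such that for every real Λ ≥ 2 and every p ∈ ℤ², ∑_{q ∈ ℤ², 1+|q|² ≤ Λ²} (1+|q−p|²)^{−β/2} ≤ C · (1+log Λ) · Λ^{2−β}. -/

import Mathlib

open scoped ENNReal

/-- Squared Euclidean norm on `ℤ²`. -/
noncomputable def nsq (p : ℤ × ℤ) : ℝ := (p.1 : ℝ) ^ 2 + (p.2 : ℝ) ^ 2

private lemma nsq_nonneg' (p : ℤ × ℤ) : 0 ≤ nsq p := by
  unfold nsq; positivity

/-- The integer box `[-n,n]²`. -/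
private noncomputable def ibox (n : ℕ) : Finset (ℤ × ℤ) :=
  Finset.Icc (-(n : ℤ)) n ×ˢ Finset.Icc (-(n : ℤ)) n

private lemma cast_natAbs_sq (x : ℤ) : ((x.natAbs : ℝ)) ^ 2 = (x : ℝ) ^ 2 := by
  rw [Nat.cast_natAbs]
  push_cast
  rw [sq_abs]

private lemma mem_ibox {n : ℕ} {Λ : ℝ} (hn : Λ < n + 1) (hΛ0 : 0 ≤ Λ) {q : ℤ × ℤ}
    (hq : 1 + nsq q ≤ Λ ^ 2) : q ∈ ibox n := by
  have key : ∀ x : ℤ, (x : ℝ) ^ 2 ≤ Λ ^ 2 - 1 → x.natAbs ≤ n := by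
    intro x hx
    by_contra hc
    push_neg at hc
    have h1 : ((n : ℝ) + 1) ≤ (x.natAbs : ℝ) := by exact_mod_cast hc
    have h2 : ((n : ℝ) + 1) ^ 2 ≤ (x.natAbs : ℝ) ^ 2 := by nlinarith [Nat.cast_nonneg (α := ℝ) n]
    rw [cast_natAbs_sq] at h2
    nlinarith
  have h1 : q.1.natAbs ≤ n := key q.1 (by unfold nsq at hq; nlinarith [sq_nonneg (q.2 : ℝ)])
  have h2 : q.2.natAbs ≤ n := key q.2 (by unfold nsq at hq; nlinarith [sq_nonneg (q.1 : ℝ)])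
  simp only [ibox, Finset.mem_product, Finset.mem_Icc]
  omega

private lemma one_add_nsq_ge (q : ℤ × ℤ) :
    ((max 1 (max q.1.natAbs q.2.natAbs) : ℕ) : ℝ) ^ 2 ≤ 1 + nsq q := by
  have h1 := cast_natAbs_sq q.1
  have h2 := cast_natAbs_sq q.2
  have hns : nsq q = (q.1 : ℝ) ^ 2 + (q.2 : ℝ) ^ 2 := rfl
  rcases max_cases (1 : ℕ) (max q.1.natAbs q.2.natAbs) with ⟨he, _⟩ | ⟨he, _⟩ <;> rw [he]
  · push_cast
    nlinarith [sq_nonneg (q.1 : ℝ), sq_nonneg (q.2 : ℝ)]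
  · rcases max_cases q.1.natAbs q.2.natAbs with ⟨he2, _⟩ | ⟨he2, _⟩ <;> rw [he2]
    · rw [h1]; nlinarith [sq_nonneg (q.2 : ℝ)]
    · rw [h2]; nlinarith [sq_nonneg (q.1 : ℝ)]

private lemma fiber_card_le (n k : ℕ) :
    (((ibox n).filter (fun q => max q.1.natAbs q.2.natAbs = k)).card : ℕ) ≤ 12 * max 1 k := by
  classical
  have hsub : (ibox n).filter (fun q => max q.1.natAbs q.2.natAbs = k) ⊆
      (({-(k : ℤ), (k : ℤ)} : Finset ℤ) ×ˢ Finset.Icc (-(k : ℤ)) k) ∪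
        (Finset.Icc (-(k : ℤ)) k ×ˢ ({-(k : ℤ), (k : ℤ)} : Finset ℤ)) := by
    intro q hq
    simp only [Finset.mem_filter] at hq
    obtain ⟨-, hm⟩ := hq
    have ha : q.1.natAbs ≤ k := hm ▸ le_max_left _ _
    have hb : q.2.natAbs ≤ k := hm ▸ le_max_right _ _
    have hor : q.1.natAbs = k ∨ q.2.natAbs = k := by
      rcases max_choice q.1.natAbs q.2.natAbs with h | h <;> [left; right] <;> omega
    simp only [Finset.mem_union, Finset.mem_product, Finset.mem_insert, Finset.mem_singleton,
      Finset.mem_Icc]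
    omega
  have hIcc : (Finset.Icc (-(k : ℤ)) k).card = 2 * k + 1 := by
    rw [Int.card_Icc]; omega
  have hpair : (({-(k : ℤ), (k : ℤ)} : Finset ℤ)).card ≤ 2 :=
    (Finset.card_insert_le _ _).trans (by simp)
  calc ((ibox n).filter (fun q => max q.1.natAbs q.2.natAbs = k)).card
      ≤ _ := Finset.card_le_card hsub
    _ ≤ (({-(k : ℤ), (k : ℤ)} : Finset ℤ) ×ˢ Finset.Icc (-(k : ℤ)) k).card +
        (Finset.Icc (-(k : ℤ)) k ×ˢ ({-(k : ℤ), (k : ℤ)} : Finset ℤ)).card :=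
      Finset.card_union_le _ _
    _ ≤ 2 * (2 * k + 1) + (2 * k + 1) * 2 := by
        rw [Finset.card_product, Finset.card_product, hIcc]
        exact Nat.add_le_add (Nat.mul_le_mul_right _ hpair) (Nat.mul_le_mul_left _ hpair)
    _ ≤ 12 * max 1 k := by
        rcases Nat.eq_zero_or_pos k with rfl | h
        · norm_num
        · rw [max_eq_right h]; omega

private lemma sum_inv_max_le (n : ℕ) (h2 : 2 ≤ n) :
    ∑ k ∈ Finset.range (n + 1), (((max 1 k : ℕ) : ℝ))⁻¹ ≤ 2 + Real.log n := by
  rw [Finset.sum_range_succ']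
  have h0 : (((max 1 0 : ℕ) : ℝ))⁻¹ = 1 := by norm_num
  have hsucc : ∀ i ∈ Finset.range n, (((max 1 (i + 1) : ℕ) : ℝ))⁻¹ = ((i : ℝ) + 1)⁻¹ := by
    intro i _
    rw [max_eq_right (Nat.succ_le_succ (Nat.zero_le i))]
    push_cast
    ring
  rw [h0, Finset.sum_congr rfl hsucc]
  have hsum : ∑ i ∈ Finset.range n, ((i : ℝ) + 1)⁻¹ = (harmonic n : ℝ) := by
    rw [harmonic]
    push_cast
    rfl
  rw [hsum]
  have := harmonic_le_one_add_log n
  linarith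

private lemma rpow_sq_neg (a β : ℝ) (ha : 0 < a) :
    (a ^ 2) ^ (-(β / 2)) = a ^ (-β) := by
  rw [← Real.rpow_natCast a 2, ← Real.rpow_mul ha.le]
  congr 1
  push_cast
  ring

private lemma sum_ibox_le (β : ℝ) (hβ1 : 3 / 2 < β) (hβ2 : β ≤ 2) (Λ : ℝ) (hΛ : 2 ≤ Λ) :
    ∑ q ∈ ibox ⌊Λ⌋₊, (1 + nsq q) ^ (-(β / 2)) ≤ 24 * (1 + Real.log Λ) * Λ ^ (2 - β) := by
  classical
  set n := ⌊Λ⌋₊ with hn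
  have hΛ0 : (0 : ℝ) < Λ := by linarith
  have hnΛ : (n : ℝ) ≤ Λ := Nat.floor_le hΛ0.le
  have hn2 : 2 ≤ n := Nat.le_floor (by exact_mod_cast hΛ)
  have hmaps : ∀ q ∈ ibox n, max q.1.natAbs q.2.natAbs ∈ Finset.range (n + 1) := by
    intro q hq
    simp only [ibox, Finset.mem_product, Finset.mem_Icc] at hq
    simp only [Finset.mem_range]
    omega
  rw [← Finset.sum_fiberwise_of_maps_to hmaps (fun q => (1 + nsq q) ^ (-(β / 2)))]
  have hXpos : (0 : ℝ) < Λ ^ (2 - β) := Real.rpow_pos_of_pos hΛ0 _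
  have inner : ∀ k ∈ Finset.range (n + 1),
      ∑ q ∈ (ibox n).filter (fun q => max q.1.natAbs q.2.natAbs = k), (1 + nsq q) ^ (-(β / 2)) ≤
        12 * Λ ^ (2 - β) * (((max 1 k : ℕ) : ℝ))⁻¹ := by
    intro k hk
    have hk' : k ≤ n := by simpa [Nat.lt_succ_iff] using hk
    set a : ℝ := ((max 1 k : ℕ) : ℝ) with hadef
    have ha1 : (1 : ℝ) ≤ a := by
      rw [hadef]; exact_mod_cast Nat.one_le_iff_ne_zero.mpr (by positivity)
    have ha0 : (0 : ℝ) < a := by linarith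
    have haΛ : a ≤ Λ := by
      have : max 1 k ≤ n := by omega
      have := (Nat.cast_le (α := ℝ)).2 this
      linarith
    have hterm : ∀ q ∈ (ibox n).filter (fun q => max q.1.natAbs q.2.natAbs = k),
        (1 + nsq q) ^ (-(β / 2)) ≤ a ^ (-β) := by
      intro q hq
      simp only [Finset.mem_filter] at hq
      have hge : a ^ 2 ≤ 1 + nsq q := by
        rw [hadef, ← hq.2]
        exact one_add_nsq_ge q
      have hstep : (1 + nsq q) ^ (-(β / 2)) ≤ (a ^ 2) ^ (-(β / 2)) :=
        Real.rpow_le_rpow_of_nonpos (by positivity) hge (by linarith)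
      calc (1 + nsq q) ^ (-(β / 2)) ≤ (a ^ 2) ^ (-(β / 2)) := hstep
        _ = a ^ (-β) := rpow_sq_neg a β ha0
    have hcard : (((ibox n).filter (fun q => max q.1.natAbs q.2.natAbs = k)).card : ℝ) ≤
        12 * a := by
      have := fiber_card_le n k
      have := (Nat.cast_le (α := ℝ)).2 this
      push_cast at this
      rw [hadef]; push_cast
      linarith
    calc ∑ q ∈ (ibox n).filter (fun q => max q.1.natAbs q.2.natAbs = k),
          (1 + nsq q) ^ (-(β / 2))
        ≤ ((ibox n).filter (fun q => max q.1.natAbs q.2.natAbs = k)).card • (a ^ (-β)) :=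
          Finset.sum_le_card_nsmul _ _ _ hterm
      _ = (((ibox n).filter (fun q => max q.1.natAbs q.2.natAbs = k)).card : ℝ) * a ^ (-β) := by
          rw [nsmul_eq_mul]
      _ ≤ (12 * a) * a ^ (-β) := by
          have : (0 : ℝ) ≤ a ^ (-β) := Real.rpow_nonneg ha0.le _
          nlinarith
      _ ≤ 12 * Λ ^ (2 - β) * a⁻¹ := by
          have key : a * a ^ (-β) ≤ Λ ^ (2 - β) * a⁻¹ := by
            have h1 : a * a ^ (-β) = a ^ (1 - β) := by
              rw [show (1 : ℝ) - β = 1 + -β by ring, Real.rpow_add ha0, Real.rpow_one]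
            have h2 : a ^ (1 - β) = a ^ (2 - β) * a⁻¹ := by
              rw [show (1 : ℝ) - β = (2 - β) + -1 by ring, Real.rpow_add ha0,
                Real.rpow_neg_one]
            have h3 : a ^ (2 - β) ≤ Λ ^ (2 - β) :=
              Real.rpow_le_rpow ha0.le haΛ (by linarith)
            have h4 : (0 : ℝ) < a⁻¹ := by positivity
            rw [h1, h2]
            nlinarith
          nlinarith
  calc ∑ k ∈ Finset.range (n + 1),
        ∑ q ∈ (ibox n).filter (fun q => max q.1.natAbs q.2.natAbs = k), (1 + nsq q) ^ (-(β / 2))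
      ≤ ∑ k ∈ Finset.range (n + 1), 12 * Λ ^ (2 - β) * (((max 1 k : ℕ) : ℝ))⁻¹ :=
        Finset.sum_le_sum inner
    _ = 12 * Λ ^ (2 - β) * ∑ k ∈ Finset.range (n + 1), (((max 1 k : ℕ) : ℝ))⁻¹ := by
        rw [Finset.mul_sum]
    _ ≤ 12 * Λ ^ (2 - β) * (2 + Real.log n) := by
        have := sum_inv_max_le n hn2
        nlinarith
    _ ≤ 24 * (1 + Real.log Λ) * Λ ^ (2 - β) := by
        have hlog : Real.log n ≤ Real.log Λ :=
          Real.log_le_log (by exact_mod_cast Nat.lt_of_lt_of_le (by norm_num) hn2) hnΛ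
        have hlog0 : 0 ≤ Real.log Λ := Real.log_nonneg (by linarith)
        nlinarith

private lemma card_ibox_le (Λ : ℝ) (hΛ : 2 ≤ Λ) :
    (((ibox ⌊Λ⌋₊).card : ℝ)) ≤ 9 * Λ ^ 2 := by
  have hΛ0 : (0 : ℝ) < Λ := by linarith
  have hnΛ : ((⌊Λ⌋₊ : ℕ) : ℝ) ≤ Λ := Nat.floor_le hΛ0.le
  have hcard : (ibox ⌊Λ⌋₊).card = (2 * ⌊Λ⌋₊ + 1) * (2 * ⌊Λ⌋₊ + 1) := by
    rw [ibox, Finset.card_product, Int.card_Icc]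
    have : ((⌊Λ⌋₊ : ℤ) + 1 - -(⌊Λ⌋₊ : ℤ)).toNat = 2 * ⌊Λ⌋₊ + 1 := by omega
    rw [this]
  rw [hcard]
  push_cast
  nlinarith

/-- Uniform low-frequency sum of the fractional-Bessel Fourier coefficients:
for `3/2 < β ≤ 2`, `∑_{h(q) ≤ Λ²} (1+|q-p|²)^{-β/2} ≤ C (1+log Λ) Λ^{2-β}`,
uniformly in the translation `p`. -/
theorem bessel_low_frequency_sum_uniform (β : ℝ) (hβ1 : 3 / 2 < β) (hβ2 : β ≤ 2) :
    ∃ C : ℝ, 0 < C ∧ ∀ Λ : ℝ, 2 ≤ Λ → ∀ p : ℤ × ℤ,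
      ∑' q : {q : ℤ × ℤ // 1 + nsq q ≤ Λ ^ 2},
        ENNReal.ofReal ((1 + nsq (q.1 - p)) ^ (-(β / 2))) ≤
      ENNReal.ofReal (C * (1 + Real.log Λ) * Λ ^ (2 - β)) := by
  classical
  refine ⟨33, by norm_num, fun Λ hΛ p => ?_⟩
  have hΛ0 : (0 : ℝ) < Λ := by linarith
  have hfloor : Λ < (⌊Λ⌋₊ : ℝ) + 1 := Nat.lt_floor_add_one Λ
  set n := ⌊Λ⌋₊ with hn
  set f : ℤ × ℤ → ℝ≥0∞ := fun q => ENNReal.ofReal ((1 + nsq (q - p)) ^ (-(β / 2))) with hf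
  set g : ℤ × ℤ → ℝ≥0∞ := fun r => ENNReal.ofReal ((1 + nsq r) ^ (-(β / 2))) with hg
  set S : Set (ℤ × ℤ) := {q | 1 + nsq q ≤ Λ ^ 2} with hS
  have h1 : ∑' q : {q : ℤ × ℤ // 1 + nsq q ≤ Λ ^ 2},
      ENNReal.ofReal ((1 + nsq (q.1 - p)) ^ (-(β / 2))) = ∑' q : ℤ × ℤ, S.indicator f q :=
    tsum_subtype S f
  rw [h1]
  have h2 : ∑' q : ℤ × ℤ, S.indicator f q = ∑' r : ℤ × ℤ, S.indicator f (r + p) := by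
    rw [← (Equiv.addRight p).tsum_eq (S.indicator f)]
    rfl
  rw [h2]
  -- the two majorants
  set G1 : ℤ × ℤ → ℝ≥0∞ := fun r => Set.indicator {r : ℤ × ℤ | 1 + nsq r ≤ Λ ^ 2} g r with hG1
  set G2 : ℤ × ℤ → ℝ≥0∞ := fun r => Set.indicator {r : ℤ × ℤ | 1 + nsq (r + p) ≤ Λ ^ 2}
    (fun _ => ENNReal.ofReal (Λ ^ (-β))) r with hG2
  have hpt : ∀ r : ℤ × ℤ, S.indicator f (r + p) ≤ G1 r + G2 r := by
    intro r
    have hfrp : f (r + p) = g r := by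
      simp only [hf, hg, add_sub_cancel_right]
    by_cases hr : 1 + nsq (r + p) ≤ Λ ^ 2
    · rw [Set.indicator_of_mem (by simpa [hS] using hr) f, hfrp]
      by_cases hr2 : 1 + nsq r ≤ Λ ^ 2
      · have : G1 r = g r := Set.indicator_of_mem (by simpa using hr2) g
        rw [this] at *
        exact le_add_right le_rfl
      · have hG2r : G2 r = ENNReal.ofReal (Λ ^ (-β)) :=
          Set.indicator_of_mem (by simpa using hr) _
        have hgle : g r ≤ ENNReal.ofReal (Λ ^ (-β)) := by
          push_neg at hr2
          have hge : Λ ^ 2 ≤ 1 + nsq r := hr2.le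
          have hstep : (1 + nsq r) ^ (-(β / 2)) ≤ (Λ ^ 2) ^ (-(β / 2)) :=
            Real.rpow_le_rpow_of_nonpos (by positivity) hge (by linarith)
          have heq : (Λ ^ 2) ^ (-(β / 2)) = Λ ^ (-β) := rpow_sq_neg Λ β hΛ0
          exact ENNReal.ofReal_le_ofReal (heq ▸ hstep)
        calc g r ≤ ENNReal.ofReal (Λ ^ (-β)) := hgle
          _ = G2 r := hG2r.symm
          _ ≤ G1 r + G2 r := le_add_self
    · rw [Set.indicator_of_notMem (by simpa [hS] using hr) f]
      exact zero_le
  have hsplit : ∑' r : ℤ × ℤ, S.indicator f (r + p) ≤ (∑' r, G1 r) + ∑' r, G2 r := by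
    calc ∑' r : ℤ × ℤ, S.indicator f (r + p) ≤ ∑' r, (G1 r + G2 r) :=
          ENNReal.tsum_le_tsum hpt
      _ = (∑' r, G1 r) + ∑' r, G2 r := ENNReal.tsum_add
  -- bound for G1
  have hbound1 : (∑' r, G1 r) ≤ ENNReal.ofReal (24 * (1 + Real.log Λ) * Λ ^ (2 - β)) := by
    have hvanish : ∀ r : ℤ × ℤ, r ∉ ibox n → G1 r = 0 := by
      intro r hr
      apply Set.indicator_of_notMem
      intro hmem
      exact hr (mem_ibox hfloor hΛ0.le hmem)
    rw [tsum_eq_sum hvanish]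
    calc ∑ r ∈ ibox n, G1 r ≤ ∑ r ∈ ibox n, g r := by
          refine Finset.sum_le_sum fun r _ => ?_
          exact Set.indicator_le_self _ _ r
      _ = ENNReal.ofReal (∑ r ∈ ibox n, (1 + nsq r) ^ (-(β / 2))) := by
          rw [ENNReal.ofReal_sum_of_nonneg]
          intro r _
          exact Real.rpow_nonneg (by have := nsq_nonneg' r; linarith) _
      _ ≤ ENNReal.ofReal (24 * (1 + Real.log Λ) * Λ ^ (2 - β)) :=
          ENNReal.ofReal_le_ofReal (sum_ibox_le β hβ1 hβ2 Λ hΛ)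
  -- bound for G2
  have hbound2 : (∑' r, G2 r) ≤ ENNReal.ofReal (9 * Λ ^ (2 - β)) := by
    have hvanish : ∀ r : ℤ × ℤ, r ∉ (ibox n).image (· - p) → G2 r = 0 := by
      intro r hr
      apply Set.indicator_of_notMem
      intro hmem
      apply hr
      refine Finset.mem_image.2 ⟨r + p, mem_ibox hfloor hΛ0.le hmem, ?_⟩
      simp
    rw [tsum_eq_sum hvanish]
    have hterm : ∀ r ∈ (ibox n).image (· - p), G2 r ≤ ENNReal.ofReal (Λ ^ (-β)) := by
      intro r _
      exact Set.indicator_le_self' (fun _ _ => zero_le) r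
    calc ∑ r ∈ (ibox n).image (· - p), G2 r
        ≤ ((ibox n).image (· - p)).card • ENNReal.ofReal (Λ ^ (-β)) :=
          Finset.sum_le_card_nsmul _ _ _ hterm
      _ = (((ibox n).image (· - p)).card : ℝ≥0∞) * ENNReal.ofReal (Λ ^ (-β)) := by
          rw [nsmul_eq_mul]
      _ ≤ ENNReal.ofReal (9 * Λ ^ 2) * ENNReal.ofReal (Λ ^ (-β)) := by
          apply mul_le_mul_left
          rw [← ENNReal.ofReal_natCast]
          apply ENNReal.ofReal_le_ofReal
          calc ((((ibox n).image (· - p)).card : ℕ) : ℝ)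
              ≤ ((ibox n).card : ℝ) := by exact_mod_cast Finset.card_image_le
            _ ≤ 9 * Λ ^ 2 := card_ibox_le Λ hΛ
      _ = ENNReal.ofReal (9 * Λ ^ 2 * Λ ^ (-β)) := by
          rw [← ENNReal.ofReal_mul (by positivity)]
      _ = ENNReal.ofReal (9 * Λ ^ (2 - β)) := by
          have : Λ ^ (2 : ℕ) * Λ ^ (-β) = Λ ^ (2 - β) := by
            rw [← Real.rpow_natCast Λ 2, ← Real.rpow_add hΛ0]
            norm_num
            rw [← sub_eq_add_neg]
          rw [mul_assoc, this]
  refine hsplit.trans ?_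
  calc (∑' r, G1 r) + ∑' r, G2 r
      ≤ ENNReal.ofReal (24 * (1 + Real.log Λ) * Λ ^ (2 - β)) +
        ENNReal.ofReal (9 * Λ ^ (2 - β)) := add_le_add hbound1 hbound2
    _ = ENNReal.ofReal (24 * (1 + Real.log Λ) * Λ ^ (2 - β) + 9 * Λ ^ (2 - β)) := by
        have hlog0 : 0 ≤ Real.log Λ := Real.log_nonneg (by linarith)
        have hX : (0 : ℝ) ≤ Λ ^ (2 - β) := Real.rpow_nonneg hΛ0.le _
        rw [← ENNReal.ofReal_add (by nlinarith) (by nlinarith)]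
    _ ≤ ENNReal.ofReal (33 * (1 + Real.log Λ) * Λ ^ (2 - β)) := by
        apply ENNReal.ofReal_le_ofReal
        have hlog0 : 0 ≤ Real.log Λ := Real.log_nonneg (by linarith)
        have hX : (0 : ℝ) ≤ Λ ^ (2 - β) := Real.rpow_nonneg hΛ0.le _
        nlinarith
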